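/- Let M₁, M₂ be real matrices of the same dimensions, u a unit vector, θ the smallest principal angle between the column spaces of M₁ and M₂. Then ‖(M₁+M₂)u‖² ≤ ‖M₁‖_S² ‖P₁u‖² + ‖M₂‖_S² ‖P₂u‖² + 2‖M₁‖_S ‖M₂‖_S ‖P₁u‖ ‖P₂u‖ cos θ, where P₁, P₂ are the orthogonal projections onto the row spaces of M₁ and M₂ respectively. -/

import Mathlib

open Matrix Real Set

noncomputable def vnorm {n : Type*} [Fintype n] (v : n → ℝ) : ℝ :=
  Real.sqrt (∑ i, v i ^ 2)

noncomputable def specNorm {m n : Type*} [Fintype m] [Fintype n] (M : Matrix m n ℝ) : ℝ :=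
  sSup {x | ∃ u : n → ℝ, vnorm u = 1 ∧ x = vnorm (M.mulVec u)}

/-- The set whose supremum is the cosine of the smallest principal angle between
the column spaces of two matrices. -/
noncomputable def angleSet {P Q : ℕ} (M1 M2 : Matrix (Fin P) (Fin Q) ℝ) : Set ℝ :=
  {x | ∃ u v : Fin Q → ℝ, M1.mulVec u ≠ 0 ∧ M2.mulVec v ≠ 0 ∧
    x = (∑ i, M1.mulVec u i * M2.mulVec v i) / (vnorm (M1.mulVec u) * vnorm (M2.mulVec v))}

/-- The row space of a matrix, as a subspace of Euclidean space. -/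
def rowSpace {P Q : ℕ} (M : Matrix (Fin P) (Fin Q) ℝ) :
    Submodule ℝ (EuclideanSpace ℝ (Fin Q)) :=
  Submodule.span ℝ (Set.range fun i => (WithLp.equiv 2 (Fin Q → ℝ)).symm (M i))

lemma vnorm_eq {n : Type*} [Fintype n] (v : n → ℝ) :
    vnorm v = ‖(WithLp.equiv 2 (n → ℝ)).symm v‖ := by
  simp [vnorm, EuclideanSpace.norm_eq, Real.norm_eq_abs, sq_abs]

lemma vnorm_mulVec {P Q : ℕ} (M : Matrix (Fin P) (Fin Q) ℝ) (x : EuclideanSpace ℝ (Fin Q)) :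
    vnorm (M.mulVec (WithLp.equiv 2 (Fin Q → ℝ) x)) = ‖Matrix.toEuclideanLin M x‖ := by
  rw [vnorm_eq, Matrix.toEuclideanLin_apply]; rfl

lemma bddAbove_specSet {P Q : ℕ} (M : Matrix (Fin P) (Fin Q) ℝ) :
    BddAbove {x | ∃ u : Fin Q → ℝ, vnorm u = 1 ∧ x = vnorm (M.mulVec u)} := by
  refine ⟨‖LinearMap.toContinuousLinearMap (Matrix.toEuclideanLin M)‖, ?_⟩
  rintro x ⟨u, hu, rfl⟩
  have h := (LinearMap.toContinuousLinearMap (Matrix.toEuclideanLin M)).le_opNorm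
    ((WithLp.equiv 2 (Fin Q → ℝ)).symm u)
  rw [vnorm_eq] at hu
  have : (WithLp.equiv 2 (Fin Q → ℝ)) ((WithLp.equiv 2 (Fin Q → ℝ)).symm u) = u :=
    (WithLp.equiv 2 (Fin Q → ℝ)).apply_symm_apply u
  rw [← this, vnorm_mulVec]
  have hu' : ‖WithLp.toLp 2 u‖ = 1 := hu
  simpa [hu'] using h

lemma specNorm_nonneg {P Q : ℕ} [Nonempty (Fin Q)] (M : Matrix (Fin P) (Fin Q) ℝ) :
    0 ≤ specNorm M := by
  inhabit (Fin Q)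
  have h1 : vnorm (Pi.single (default : Fin Q) (1:ℝ)) = 1 := by
    simp [vnorm, Pi.single_apply]
  have hmem : vnorm (M.mulVec (Pi.single (default : Fin Q) (1:ℝ))) ∈
      {x | ∃ u : Fin Q → ℝ, vnorm u = 1 ∧ x = vnorm (M.mulVec u)} := ⟨_, h1, rfl⟩
  refine le_trans ?_ (le_csSup (bddAbove_specSet M) hmem)
  exact Real.sqrt_nonneg _

lemma norm_toEuclideanLin_le {P Q : ℕ} [Nonempty (Fin Q)] (M : Matrix (Fin P) (Fin Q) ℝ)
    (x : EuclideanSpace ℝ (Fin Q)) :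
    ‖Matrix.toEuclideanLin M x‖ ≤ specNorm M * ‖x‖ := by
  rcases eq_or_ne x 0 with rfl | hx
  · simp
  · have hxn : (0:ℝ) < ‖x‖ := norm_pos_iff.mpr hx
    set y : EuclideanSpace ℝ (Fin Q) := ‖x‖⁻¹ • x with hy
    have hyn : ‖y‖ = 1 := by
      rw [hy, norm_smul]; simp [abs_of_pos hxn, inv_mul_cancel₀ hxn.ne']
    have hmem : ‖Matrix.toEuclideanLin M y‖ ∈
        {x | ∃ u : Fin Q → ℝ, vnorm u = 1 ∧ x = vnorm (M.mulVec u)} := by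
      refine ⟨WithLp.equiv 2 (Fin Q → ℝ) y, ?_, (vnorm_mulVec M y).symm⟩
      rw [vnorm_eq, (WithLp.equiv 2 (Fin Q → ℝ)).symm_apply_apply, hyn]
    have hle : ‖Matrix.toEuclideanLin M y‖ ≤ specNorm M := le_csSup (bddAbove_specSet M) hmem
    have : Matrix.toEuclideanLin M x = ‖x‖ • Matrix.toEuclideanLin M y := by
      rw [hy, _root_.map_smul, smul_smul, mul_inv_cancel₀ hxn.ne', one_smul]
    rw [this, norm_smul, Real.norm_eq_abs, abs_of_pos hxn, mul_comm]
    exact mul_le_mul_of_nonneg_right hle hxn.le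

lemma toEuclideanLin_proj {P Q : ℕ} (M : Matrix (Fin P) (Fin Q) ℝ)
    (x : EuclideanSpace ℝ (Fin Q)) :
    Matrix.toEuclideanLin M x =
      Matrix.toEuclideanLin M ((rowSpace M).orthogonalProjectionOnto x : EuclideanSpace ℝ (Fin Q)) := by
  have hker : ∀ w ∈ (rowSpace M)ᗮ, Matrix.toEuclideanLin M w = 0 := by
    intro w hw
    have : ∀ i, ((Matrix.toEuclideanLin M w) : EuclideanSpace ℝ (Fin P)) i = 0 := by
      intro i
      have hrow : (WithLp.equiv 2 (Fin Q → ℝ)).symm (M i) ∈ rowSpace M :=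
        Submodule.subset_span ⟨i, rfl⟩
      have h0 : inner ℝ ((WithLp.equiv 2 (Fin Q → ℝ)).symm (M i)) w = (0:ℝ) :=
        Submodule.inner_right_of_mem_orthogonal hrow hw
      rw [PiLp.inner_apply] at h0
      show (M.mulVec (WithLp.equiv 2 (Fin Q → ℝ) w)) i = 0
      rw [Matrix.mulVec, dotProduct]
      simpa [RCLike.inner_apply, mul_comm] using h0
    ext i
    simpa using this i
  have hsub : x - ((rowSpace M).orthogonalProjectionOnto x : EuclideanSpace ℝ (Fin Q)) ∈ (rowSpace M)ᗮ :=
    Submodule.sub_starProjection_mem_orthogonal (K := rowSpace M) x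
  have := hker _ hsub
  rw [map_sub] at this
  exact sub_eq_zero.mp this

lemma vnorm_pos {n : Type*} [Fintype n] {v : n → ℝ} (hv : v ≠ 0) : 0 < vnorm v := by
  rw [vnorm_eq]
  rw [norm_pos_iff]
  intro h
  apply hv
  have := congrArg (WithLp.equiv 2 (n → ℝ)) h
  simpa using this

lemma sum_mul_eq_inner {n : Type*} [Fintype n] (v w : n → ℝ) :
    ∑ i, v i * w i = inner ℝ ((WithLp.equiv 2 (n → ℝ)).symm v)
      ((WithLp.equiv 2 (n → ℝ)).symm w) := by
  rw [PiLp.inner_apply]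
  simp [RCLike.inner_apply, mul_comm]

lemma bddAbove_angleSet {P Q : ℕ} (M1 M2 : Matrix (Fin P) (Fin Q) ℝ) :
    BddAbove (angleSet M1 M2) := by
  refine ⟨1, ?_⟩
  rintro x ⟨a, b, ha, hb, rfl⟩
  have hp : 0 < vnorm (M1.mulVec a) * vnorm (M2.mulVec b) :=
    mul_pos (vnorm_pos ha) (vnorm_pos hb)
  rw [div_le_one hp, sum_mul_eq_inner, vnorm_eq, vnorm_eq]
  exact real_inner_le_norm _ _

/-- for a unit vector `u`,
`‖(M₁+M₂)u‖² ≤ ‖M₁‖_S²‖P₁u‖² + ‖M₂‖_S²‖P₂u‖² + 2‖M₁‖_S‖M₂‖_S‖P₁u‖‖P₂u‖ cos θ`,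
where `P_i` is the orthogonal projection onto the row space of `M_i` and `θ`
is the smallest principal angle between the column spaces. -/
theorem norm_apply_add_principal_angle_bound {P Q : ℕ}
    (M1 M2 : Matrix (Fin P) (Fin Q) ℝ)
    (u : EuclideanSpace ℝ (Fin Q)) (hu : ‖u‖ = 1)
    (θ : ℝ) (hθmem : θ ∈ Set.Icc 0 (π / 2))
    (hθ : Real.cos θ = sSup (angleSet M1 M2)) :
    vnorm ((M1 + M2).mulVec (WithLp.equiv 2 (Fin Q → ℝ) u)) ^ 2 ≤
      specNorm M1 ^ 2 * ‖((rowSpace M1).orthogonalProjectionOnto u : EuclideanSpace ℝ (Fin Q))‖ ^ 2 +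
      specNorm M2 ^ 2 * ‖((rowSpace M2).orthogonalProjectionOnto u : EuclideanSpace ℝ (Fin Q))‖ ^ 2 +
      2 * specNorm M1 * specNorm M2 *
        ‖((rowSpace M1).orthogonalProjectionOnto u : EuclideanSpace ℝ (Fin Q))‖ *
        ‖((rowSpace M2).orthogonalProjectionOnto u : EuclideanSpace ℝ (Fin Q))‖ * Real.cos θ := by
  have hQ : Nonempty (Fin Q) := by
    by_contra h
    rw [not_nonempty_iff] at h
    have hu0 : u = 0 := by ext i; exact (h.false i).elim
    rw [hu0, norm_zero] at hu
    exact one_ne_zero hu.symm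
  set w1 : EuclideanSpace ℝ (Fin P) := Matrix.toEuclideanLin M1 u with hw1
  set w2 : EuclideanSpace ℝ (Fin P) := Matrix.toEuclideanLin M2 u with hw2
  set n1 : ℝ := ‖((rowSpace M1).orthogonalProjectionOnto u : EuclideanSpace ℝ (Fin Q))‖ with hn1
  set n2 : ℝ := ‖((rowSpace M2).orthogonalProjectionOnto u : EuclideanSpace ℝ (Fin Q))‖ with hn2
  have hcos : 0 ≤ Real.cos θ :=
    Real.cos_nonneg_of_mem_Icc ⟨by linarith [hθmem.1, Real.pi_pos], hθmem.2⟩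
  have h1 : ‖w1‖ ≤ specNorm M1 * n1 := by
    rw [hw1, toEuclideanLin_proj]; exact norm_toEuclideanLin_le M1 _
  have h2 : ‖w2‖ ≤ specNorm M2 * n2 := by
    rw [hw2, toEuclideanLin_proj]; exact norm_toEuclideanLin_le M2 _
  have hsum : vnorm ((M1 + M2).mulVec (WithLp.equiv 2 (Fin Q → ℝ) u)) = ‖w1 + w2‖ := by
    rw [vnorm_eq]
    congr 1
    rw [Matrix.add_mulVec]
    simp [hw1, hw2, Matrix.toEuclideanLin_apply]
  have hinner : inner ℝ w1 w2 ≤ ‖w1‖ * ‖w2‖ * Real.cos θ := by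
    by_cases hz : M1.mulVec (WithLp.equiv 2 (Fin Q → ℝ) u) = 0 ∨
        M2.mulVec (WithLp.equiv 2 (Fin Q → ℝ) u) = 0
    · rcases hz with hz | hz
      · have : w1 = 0 := by rw [hw1, Matrix.toEuclideanLin_apply, show u.ofLp = WithLp.equiv 2 (Fin Q → ℝ) u from rfl, hz]; simp
        simp [this]
      · have : w2 = 0 := by rw [hw2, Matrix.toEuclideanLin_apply, show u.ofLp = WithLp.equiv 2 (Fin Q → ℝ) u from rfl, hz]; simp
        simp [this]
    · push_neg at hz
      obtain ⟨hz1, hz2⟩ := hz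
      have hmem : (∑ i, M1.mulVec (WithLp.equiv 2 (Fin Q → ℝ) u) i *
            M2.mulVec (WithLp.equiv 2 (Fin Q → ℝ) u) i) /
          (vnorm (M1.mulVec (WithLp.equiv 2 (Fin Q → ℝ) u)) *
            vnorm (M2.mulVec (WithLp.equiv 2 (Fin Q → ℝ) u))) ∈ angleSet M1 M2 :=
        ⟨_, _, hz1, hz2, rfl⟩
      have hle := le_csSup (bddAbove_angleSet M1 M2) hmem
      rw [← hθ] at hle
      have hp : 0 < vnorm (M1.mulVec (WithLp.equiv 2 (Fin Q → ℝ) u)) *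
          vnorm (M2.mulVec (WithLp.equiv 2 (Fin Q → ℝ) u)) :=
        mul_pos (vnorm_pos hz1) (vnorm_pos hz2)
      rw [div_le_iff₀ hp] at hle
      have he1 : vnorm (M1.mulVec (WithLp.equiv 2 (Fin Q → ℝ) u)) = ‖w1‖ := vnorm_mulVec M1 u
      have he2 : vnorm (M2.mulVec (WithLp.equiv 2 (Fin Q → ℝ) u)) = ‖w2‖ := vnorm_mulVec M2 u
      have hs : ∑ i, M1.mulVec (WithLp.equiv 2 (Fin Q → ℝ) u) i *
          M2.mulVec (WithLp.equiv 2 (Fin Q → ℝ) u) i = inner ℝ w1 w2 := by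
        rw [sum_mul_eq_inner]
        rfl
      rw [hs, he1, he2] at hle
      linarith
  have key : ‖w1‖ * ‖w2‖ * Real.cos θ ≤ (specNorm M1 * n1) * (specNorm M2 * n2) * Real.cos θ := by
    apply mul_le_mul_of_nonneg_right _ hcos
    exact mul_le_mul h1 h2 (norm_nonneg _) (le_trans (norm_nonneg _) h1)
  have hsq1 : ‖w1‖ ^ 2 ≤ (specNorm M1 * n1) ^ 2 := pow_le_pow_left₀ (norm_nonneg _) h1 2
  have hsq2 : ‖w2‖ ^ 2 ≤ (specNorm M2 * n2) ^ 2 := pow_le_pow_left₀ (norm_nonneg _) h2 2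
  rw [hsum, norm_add_sq_real]
  nlinarith [hsq1, hsq2, hinner, key]
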